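/- Sublinear convergence of gradient descent for convex smooth objectives: Let F: ℝ^d → ℝ be differentiable, convex, and β-smooth, with minimizer ŵ. Run gradient descent w_{t+1} = w_t − (1/β)∇F(w_t). Then for all T ≥ 1, F(w_T) − F(ŵ) ≤ 2β‖w_0 − ŵ‖²/T. -/

import Mathlib

open Real MeasureTheory RealInnerProductSpace

lemma fderiv_eq_inner_gradient {d : ℕ} (F : EuclideanSpace ℝ (Fin d) → ℝ)
    (hdiff : Differentiable ℝ F) (x v : EuclideanSpace ℝ (Fin d)) :
    fderiv ℝ F x v = ⟪gradient F x, v⟫ := by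
  have h := (hdiff x).hasGradientAt
  rw [hasGradientAt_iff_hasFDerivAt] at h
  rw [h.fderiv]
  simp

lemma conv_grad_ineq {d : ℕ} (F : EuclideanSpace ℝ (Fin d) → ℝ)
    (hdiff : Differentiable ℝ F) (hconv : ConvexOn ℝ Set.univ F)
    (x y : EuclideanSpace ℝ (Fin d)) :
    ⟪gradient F x, y - x⟫ ≤ F y - F x := by
  set g : ℝ → ℝ := fun t => F (x + t • (y - x)) with hgdef
  have hgconv : ConvexOn ℝ Set.univ g := by
    have := hconv.comp_affineMap (AffineMap.lineMap x y : ℝ →ᵃ[ℝ] EuclideanSpace ℝ (Fin d))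
    simp only [Set.preimage_univ] at this
    have heq : g = F ∘ ⇑(AffineMap.lineMap x y : ℝ →ᵃ[ℝ] EuclideanSpace ℝ (Fin d)) := by
      funext t
      simp [hgdef, AffineMap.lineMap_apply, Function.comp]
      rw [add_comm]
    rw [heq]; exact this
  have hline : HasDerivAt (fun t : ℝ => x + t • (y - x)) (y - x) 0 := by
    simpa using ((hasDerivAt_id (0 : ℝ)).smul_const (y - x)).const_add x
  have hF : HasFDerivAt F (fderiv ℝ F x) ((fun t : ℝ => x + t • (y - x)) 0) := by
    simpa using (hdiff x).hasFDerivAt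
  have hgderiv : HasDerivAt g (⟪gradient F x, y - x⟫) 0 := by
    have := hF.comp_hasDerivAt 0 hline
    rwa [fderiv_eq_inner_gradient F hdiff] at this
  have hslope := hgconv.le_slope_of_hasDerivAt (Set.mem_univ (0 : ℝ)) (Set.mem_univ (1 : ℝ))
    one_pos hgderiv
  have : slope g 0 1 = F y - F x := by
    rw [slope_def_field]
    simp [hgdef]
  linarith [hslope, this.le, this.ge]

/-- Sublinear convergence of gradient descent for convex smooth objectives. -/
theorem gd_sublinear_convergence_convex
    (d : ℕ) (β : ℝ) (hβ : 0 < β)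
    (F : EuclideanSpace ℝ (Fin d) → ℝ)
    (hdiff : Differentiable ℝ F)
    (hconv : ConvexOn ℝ Set.univ F)
    (hsmooth : ∀ u v, |F u - F v - ⟪gradient F v, u - v⟫| ≤ β / 2 * ‖u - v‖ ^ 2)
    (what : EuclideanSpace ℝ (Fin d)) (hmin : ∀ x, F what ≤ F x)
    (w : ℕ → EuclideanSpace ℝ (Fin d))
    (hw : ∀ t, w (t + 1) = w t - (1 / β) • gradient F (w t)) :
    ∀ T : ℕ, 1 ≤ T → F (w T) - F what ≤ 2 * β * ‖w 0 - what‖ ^ 2 / T := by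
  set g : ℕ → EuclideanSpace ℝ (Fin d) := fun t => gradient F (w t) with hg
  -- descent lemma
  have hdesc : ∀ t, F (w (t + 1)) ≤ F (w t) - 1 / (2 * β) * ‖g t‖ ^ 2 := by
    intro t
    have h := (abs_le.mp (hsmooth (w (t + 1)) (w t))).2
    have hsub : w (t + 1) - w t = -((1 / β) • g t) := by rw [hw t]; abel
    have hinner : ⟪g t, w (t + 1) - w t⟫ = -(1 / β) * ‖g t‖ ^ 2 := by
      rw [hsub, inner_neg_right, real_inner_smul_right, real_inner_self_eq_norm_sq]
      ring
    have hnorm : ‖w (t + 1) - w t‖ ^ 2 = (1 / β) ^ 2 * ‖g t‖ ^ 2 := by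
      rw [hsub, norm_neg, norm_smul, mul_pow]
      congr 1
      rw [Real.norm_eq_abs, sq_abs]
    rw [hinner, hnorm] at h
    have hβ' : β ≠ 0 := ne_of_gt hβ
    have e1 : (1 / β) * ‖g t‖ ^ 2 = 2 * (1 / (2 * β) * ‖g t‖ ^ 2) := by
      field_simp
    have e2 : β / 2 * ((1 / β) ^ 2 * ‖g t‖ ^ 2) = 1 / (2 * β) * ‖g t‖ ^ 2 := by
      field_simp
    linarith
  -- convexity step
  have hconvstep : ∀ t, F (w t) - F what ≤ ⟪g t, w t - what⟫ := by
    intro t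
    have := conv_grad_ineq F hdiff hconv (w t) what
    have h2 : ⟪gradient F (w t), what - w t⟫ = -⟪g t, w t - what⟫ := by
      rw [← inner_neg_right]; simp [hg]
    linarith [this, h2.le, h2.ge]
  -- per-step bound
  have hstep : ∀ t, F (w (t + 1)) - F what ≤
      β / 2 * (‖w t - what‖ ^ 2 - ‖w (t + 1) - what‖ ^ 2) := by
    intro t
    have hsub : w (t + 1) - what = (w t - what) - (1 / β) • g t := by rw [hw t]; abel
    have hnorm : ‖w (t + 1) - what‖ ^ 2 = ‖w t - what‖ ^ 2
        - 2 * ((1 / β) * ⟪w t - what, g t⟫) + (1 / β) ^ 2 * ‖g t‖ ^ 2 := by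
      rw [hsub, @norm_sub_sq_real, real_inner_smul_right, norm_smul, mul_pow,
        Real.norm_eq_abs, sq_abs]
    have hsym : ⟪w t - what, g t⟫ = ⟪g t, w t - what⟫ := real_inner_comm _ _
    have h1 := hdesc t
    have h2 := hconvstep t
    have hβ' : β ≠ 0 := ne_of_gt hβ
    rw [hnorm, hsym]
    have e1 : β / 2 * (‖w t - what‖ ^ 2 - (‖w t - what‖ ^ 2
        - 2 * ((1 / β) * ⟪g t, w t - what⟫) + (1 / β) ^ 2 * ‖g t‖ ^ 2))
        = ⟪g t, w t - what⟫ - 1 / (2 * β) * ‖g t‖ ^ 2 := by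
      field_simp
      ring
    rw [e1]
    linarith
  -- monotonicity
  have hmono : Antitone (fun t => F (w t)) := by
    apply antitone_nat_of_succ_le
    intro t
    have := hdesc t
    have h0 : 0 ≤ 1 / (2 * β) * ‖g t‖ ^ 2 := by positivity
    linarith
  intro T hT
  have hTpos : (0 : ℝ) < T := by exact_mod_cast hT
  -- sum over range T
  have hsum : (T : ℝ) * (F (w T) - F what) ≤ β / 2 * ‖w 0 - what‖ ^ 2 := by
    have h1 : (T : ℝ) * (F (w T) - F what)
        ≤ ∑ t ∈ Finset.range T, (F (w (t + 1)) - F what) := by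
      have : (T : ℝ) * (F (w T) - F what)
          = ∑ _t ∈ Finset.range T, (F (w T) - F what) := by
        simp [Finset.sum_const, nsmul_eq_mul]
        ring
      rw [this]
      apply Finset.sum_le_sum
      intro t ht
      have : F (w T) ≤ F (w (t + 1)) := hmono (Finset.mem_range.mp ht)
      linarith
    have h2 : ∑ t ∈ Finset.range T, (F (w (t + 1)) - F what)
        ≤ ∑ t ∈ Finset.range T, β / 2 * (‖w t - what‖ ^ 2 - ‖w (t + 1) - what‖ ^ 2) :=
      Finset.sum_le_sum fun t _ => hstep t
    have h3 : ∑ t ∈ Finset.range T, β / 2 * (‖w t - what‖ ^ 2 - ‖w (t + 1) - what‖ ^ 2)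
        = β / 2 * (‖w 0 - what‖ ^ 2 - ‖w T - what‖ ^ 2) := by
      rw [← Finset.mul_sum, Finset.sum_range_sub' (fun t => ‖w t - what‖ ^ 2)]
    have h4 : β / 2 * (‖w 0 - what‖ ^ 2 - ‖w T - what‖ ^ 2) ≤ β / 2 * ‖w 0 - what‖ ^ 2 := by
      nlinarith [sq_nonneg ‖w T - what‖]
    linarith
  have hfinal : F (w T) - F what ≤ β / 2 * ‖w 0 - what‖ ^ 2 / T := by
    rw [le_div_iff₀ hTpos]
    linarith [hsum]
  have : β / 2 * ‖w 0 - what‖ ^ 2 / T ≤ 2 * β * ‖w 0 - what‖ ^ 2 / T := by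
    gcongr
    nlinarith [sq_nonneg ‖w 0 - what‖]
  linarith
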